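/- Let p be an odd prime, 0 ≤ r ≤ p−1, α ∈ F_p^×, and let ρ = Sym^{2r}(F̄_p²) ⊗ det^{−r} act on homogeneous polynomials of degree 2r over F̄_p. Then the vector (αx² − y²)^r is fixed by the matrix k_α = [[1,α],[1,1]] (whenever 1−α ≠ 0). -/
import Mathlib


open MvPolynomial

/-- The action of a `2 × 2` matrix `g` on homogeneous polynomials of degree `2r` in
`x = X 0`, `y = X 1` defining the representation `Sym^{2r}(F̄_p²) ⊗ det^{-r}`:
`(ρ(g)·f)(x, y) = f(ax + cy, bx + dy) · det(g)^{-r}` for `g = [[a,b],[c,d]]`. -/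
noncomputable def symDetAct (p r : ℕ) [Fact p.Prime]
    (g : Matrix (Fin 2) (Fin 2) (AlgebraicClosure (ZMod p)))
    (P : MvPolynomial (Fin 2) (AlgebraicClosure (ZMod p))) :
    MvPolynomial (Fin 2) (AlgebraicClosure (ZMod p)) :=
  C ((g.det) ^ r)⁻¹ *
    MvPolynomial.bind₁
      ![C (g 0 0) * X 0 + C (g 1 0) * X 1, C (g 0 1) * X 0 + C (g 1 1) * X 1] P

/-- Let `p` be an odd prime, `0 ≤ r ≤ p - 1`, `α ∈ F_p^×` with `1 - α ≠ 0`, and let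
`ρ = Sym^{2r}(F̄_p²) ⊗ det^{-r}` act on homogeneous polynomials of degree `2r` over
`F̄_p`. Then `(αx² - y²)^r` is fixed by `k_α = [[1,α],[1,1]]`. -/
theorem stmt_9 (p : ℕ) [Fact p.Prime] (hodd : Odd p) (r : ℕ) (hr : r ≤ p - 1)
    (α : (ZMod p)ˣ) (hα : (α : ZMod p) ≠ 1) :
    symDetAct p r
        !![1, algebraMap (ZMod p) (AlgebraicClosure (ZMod p)) (α : ZMod p); 1, 1]
        ((C (algebraMap (ZMod p) (AlgebraicClosure (ZMod p)) (α : ZMod p)) * X 0 ^ 2 -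
            X 1 ^ 2) ^ r) =
      (C (algebraMap (ZMod p) (AlgebraicClosure (ZMod p)) (α : ZMod p)) * X 0 ^ 2 -
          X 1 ^ 2) ^ r := by
  set a := algebraMap (ZMod p) (AlgebraicClosure (ZMod p)) (α : ZMod p) with ha_def
  have ha : a ≠ 1 := by
    intro h
    apply hα
    have h1 : a = algebraMap (ZMod p) (AlgebraicClosure (ZMod p)) 1 := by simpa using h
    exact (algebraMap (ZMod p) (AlgebraicClosure (ZMod p))).injective h1
  have hdet : (!![1, a; 1, 1] : Matrix (Fin 2) (Fin 2)
      (AlgebraicClosure (ZMod p))).det = 1 - a := by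
    simp [Matrix.det_fin_two_of]
  have hne : ((1 : AlgebraicClosure (ZMod p)) - a) ^ r ≠ 0 :=
    pow_ne_zero _ (sub_ne_zero.mpr (Ne.symm ha))
  have key : bind₁ (![X 0 + X 1, C a * X 0 + X 1] :
        Fin 2 → MvPolynomial (Fin 2) (AlgebraicClosure (ZMod p)))
      (C a * X 0 ^ 2 - X 1 ^ 2) =
      C (1 - a) * (C a * X 0 ^ 2 - X 1 ^ 2) := by
    simp only [map_sub, map_mul, map_pow, bind₁_X_right, bind₁_C_right,
      Matrix.cons_val_zero, Matrix.cons_val_one, Matrix.head_cons, map_sub, C_1]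
    ring
  have e00 : (!![1, a; 1, 1] : Matrix (Fin 2) (Fin 2) (AlgebraicClosure (ZMod p))) 0 0 = 1 := rfl
  have e10 : (!![1, a; 1, 1] : Matrix (Fin 2) (Fin 2) (AlgebraicClosure (ZMod p))) 1 0 = 1 := rfl
  have e01 : (!![1, a; 1, 1] : Matrix (Fin 2) (Fin 2) (AlgebraicClosure (ZMod p))) 0 1 = a := rfl
  have e11 : (!![1, a; 1, 1] : Matrix (Fin 2) (Fin 2) (AlgebraicClosure (ZMod p))) 1 1 = 1 := rfl
  simp only [symDetAct, e00, e10, e01, e11, hdet, C_1, one_mul, map_pow, key]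
  rw [mul_pow, ← C_pow, ← mul_assoc, ← C_mul, inv_mul_cancel₀ hne, C_1, one_mul]
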